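/- Under the same setup as Lemma 4 (functions $f^i$ with $\|\nabla^2 f^i(x)\| \le \gamma$ and $\delta$-Lipschitz Hessians in Frobenius norm, doubly stochastic $W$, distributed Newton recursions $\mathbf{x}_{k+1} = \mathbf{W}\mathbf{x}_k - \alpha_k\mathbf{B}_k^{-1}\mathbf{g}_k$, $\mathbf{g}_{k+1} = \mathbf{W}[\mathbf{g}_k + \mathfrak{g}(\mathbf{x}_{k+1}) - \mathfrak{g}(\mathbf{x}_k)]$, $\mathbf{h}_{k+1} = \mathbf{W}[\mathbf{h}_k + \mathfrak{h}(\mathbf{x}_{k+1}) - \mathfrak{h}(\mathbf{x}_k)]$, common step size $\alpha_k \ge 0$), set $\eta = \|\mathbf{I} - W\|$, $\upsilon = \|A - W\|$ (operator norms), and $G_k = \|\bar{\mathfrak{g}}(\bar{\mathbf{x}}_k)\|$. Then for every $k$, the consensus errors satisfy the one-step bounds: (i) $\|\tilde{\mathbf{x}}_{k+1}\| \le \upsilon\|\tilde{\mathbf{x}}_k\| + \alpha_k\beta\|\mathbf{g}_k\|$; (ii) $\|\tilde{\mathbf{g}}_{k+1}\| \le \upsilon\big(\|\tilde{\mathbf{g}}_k\|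 + \gamma\eta\|\tilde{\mathbf{x}}_k\| + \alpha_k\gamma\beta\|\mathbf{g}_k\|\big)$; (iii) $\|\tilde{\mathbf{h}}_{k+1}\|_{\mathrm{F}} \le \upsilon\big(\|\tilde{\mathbf{h}}_k\|_{\mathrm{F}} + \delta\eta\|\tilde{\mathbf{x}}_k\| + \alpha_k\delta\beta\|\mathbf{g}_k\|\big)$; where in each bound $\|\mathbf{g}_k\| \le G_k + \gamma\|\tilde{\mathbf{x}}_k\| + \|\tilde{\mathbf{g}}_k\|$. -/

import Mathlib

open Matrix

/-- Euclidean (`2`-) norm of a vector in `ℝ^N`. -/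
noncomputable def vecNorm {N : ℕ} (v : Fin N → ℝ) : ℝ :=
  Real.sqrt (v ⬝ᵥ v)

/-- `ℓ²` norm of a stacked vector in `(ℝ^N)^I`. -/
noncomputable def stackNorm {I N : ℕ} (x : Fin I → Fin N → ℝ) : ℝ :=
  Real.sqrt (∑ i, x i ⬝ᵥ x i)

/-- `ℓ²` (Frobenius-type) norm of a stacked family of matrices. -/
noncomputable def stackFrobNorm {I N : ℕ} (h : Fin I → Matrix (Fin N) (Fin N) ℝ) : ℝ :=
  Real.sqrt (∑ i, ∑ a, ∑ b, (h i a b) ^ 2)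

/-- The eigenvalue-flooring map `B`: for a symmetric matrix `H = UΛUᵀ`, replace each
eigenvalue `λᵢ` by `max (λᵢ) β⁻¹`. (On non-symmetric matrices it is the identity.) -/
noncomputable def floorMap {N : ℕ} (β : ℝ) (H : Matrix (Fin N) (Fin N) ℝ) :
    Matrix (Fin N) (Fin N) ℝ :=
  if h : H.IsHermitian then
    (h.eigenvectorUnitary : Matrix (Fin N) (Fin N) ℝ) *
      Matrix.diagonal (fun i => max (h.eigenvalues i) β⁻¹) *
      star (h.eigenvectorUnitary : Matrix (Fin N) (Fin N) ℝ)
  else H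

noncomputable def sN {I : ℕ} {κ : Type*} [Fintype κ] (x : Fin I → κ → ℝ) : ℝ :=
  Real.sqrt (∑ i, ∑ a, (x i a)^2)


lemma vecNorm_eq_sqrt {N : ℕ} (v : Fin N → ℝ) : vecNorm v = Real.sqrt (∑ a, (v a)^2) := by
  simp [vecNorm, dotProduct, sq]

lemma stackNorm_eq_sN {I N : ℕ} (x : Fin I → Fin N → ℝ) : stackNorm x = sN x := by
  simp [stackNorm, sN, dotProduct, sq]

lemma stackFrobNorm_eq_sN {I N : ℕ} (h : Fin I → Matrix (Fin N) (Fin N) ℝ) :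
    stackFrobNorm h = sN (fun i (p : Fin N × Fin N) => h i p.1 p.2) := by
  simp [stackFrobNorm, sN, Fintype.sum_prod_type]

lemma vecNorm_eq_norm {N : ℕ} (v : Fin N → ℝ) :
    vecNorm v = ‖((WithLp.equiv 2 (Fin N → ℝ)).symm v : EuclideanSpace ℝ (Fin N))‖ := by
  rw [EuclideanSpace.norm_eq, vecNorm_eq_sqrt]
  congr 1
  refine Finset.sum_congr rfl fun a _ => ?_
  simp [Real.norm_eq_abs, sq_abs]

lemma sN_eq_norm {I : ℕ} {κ : Type*} [Fintype κ] (x : Fin I → κ → ℝ) :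
    sN x = ‖((WithLp.equiv 2 (Fin I × κ → ℝ)).symm (fun p => x p.1 p.2) :
      EuclideanSpace ℝ (Fin I × κ))‖ := by
  rw [EuclideanSpace.norm_eq, sN]
  simp only [WithLp.equiv_symm_apply, WithLp.ofLp_toLp, PiLp.toLp_apply, Real.norm_eq_abs, sq_abs]
  rw [Fintype.sum_prod_type (f := fun p : Fin I × κ => (x p.1 p.2) ^ 2)]

lemma sN_nonneg {I : ℕ} {κ : Type*} [Fintype κ] (x : Fin I → κ → ℝ) : 0 ≤ sN x :=
  Real.sqrt_nonneg _

lemma sN_add_le {I : ℕ} {κ : Type*} [Fintype κ] (x y : Fin I → κ → ℝ) :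
    sN (fun i => x i + y i) ≤ sN x + sN y := by
  rw [sN_eq_norm, sN_eq_norm, sN_eq_norm]
  have : ((WithLp.equiv 2 (Fin I × κ → ℝ)).symm (fun p => (x p.1 + y p.1) p.2) :
      EuclideanSpace ℝ (Fin I × κ)) =
      (WithLp.equiv 2 (Fin I × κ → ℝ)).symm (fun p => x p.1 p.2) +
      (WithLp.equiv 2 (Fin I × κ → ℝ)).symm (fun p => y p.1 p.2) := rfl
  rw [this]
  exact norm_add_le _ _

lemma sN_smul {I : ℕ} {κ : Type*} [Fintype κ] (c : ℝ) (x : Fin I → κ → ℝ) :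
    sN (fun i => c • x i) = |c| * sN x := by
  rw [sN_eq_norm, sN_eq_norm]
  have : ((WithLp.equiv 2 (Fin I × κ → ℝ)).symm (fun p => (c • x p.1) p.2) :
      EuclideanSpace ℝ (Fin I × κ)) =
      c • (WithLp.equiv 2 (Fin I × κ → ℝ)).symm (fun p => x p.1 p.2) := rfl
  rw [this, norm_smul, Real.norm_eq_abs]

lemma sN_neg {I : ℕ} {κ : Type*} [Fintype κ] (x : Fin I → κ → ℝ) :
    sN (fun i => -(x i)) = sN x := by
  have := sN_smul (-1 : ℝ) x
  simpa using this

lemma vecNorm_mulVec_le {I : ℕ} (M : Matrix (Fin I) (Fin I) ℝ) (v : Fin I → ℝ) :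
    vecNorm (M *ᵥ v) ≤ ‖Matrix.toEuclideanCLM (𝕜 := ℝ) (n := Fin I) M‖ * vecNorm v := by
  rw [vecNorm_eq_norm, vecNorm_eq_norm]
  have h : ((WithLp.equiv 2 (Fin I → ℝ)).symm (M *ᵥ v) : EuclideanSpace ℝ (Fin I)) =
      Matrix.toEuclideanCLM (𝕜 := ℝ) (n := Fin I) M ((WithLp.equiv 2 (Fin I → ℝ)).symm v) := by
    exact (Matrix.toEuclideanCLM_toLp M v).symm
  rw [h]
  exact (Matrix.toEuclideanCLM (𝕜 := ℝ) (n := Fin I) M).le_opNorm _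

-- squared version

lemma sum_sq_mulVec_le {I : ℕ} (M : Matrix (Fin I) (Fin I) ℝ) (v : Fin I → ℝ) :
    ∑ i, ((M *ᵥ v) i)^2 ≤ ‖Matrix.toEuclideanCLM (𝕜 := ℝ) (n := Fin I) M‖^2 * ∑ i, (v i)^2 := by
  have h := vecNorm_mulVec_le M v
  have h1 : vecNorm (M *ᵥ v) = Real.sqrt (∑ i, ((M *ᵥ v) i)^2) := by
    simp [vecNorm, dotProduct, sq]
  have h2 : vecNorm v = Real.sqrt (∑ i, (v i)^2) := by
    simp [vecNorm, dotProduct, sq]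
  rw [h1, h2] at h
  have hnn : (0:ℝ) ≤ ∑ i, ((M *ᵥ v) i)^2 := Finset.sum_nonneg fun _ _ => sq_nonneg _
  have hnn2 : (0:ℝ) ≤ ∑ i, (v i)^2 := Finset.sum_nonneg fun _ _ => sq_nonneg _
  have := mul_self_le_mul_self (Real.sqrt_nonneg _) h
  rw [Real.mul_self_sqrt hnn] at this
  calc ∑ i, ((M *ᵥ v) i)^2 ≤ (‖Matrix.toEuclideanCLM (𝕜 := ℝ) (n := Fin I) M‖ * Real.sqrt (∑ i, (v i)^2)) *
      (‖Matrix.toEuclideanCLM (𝕜 := ℝ) (n := Fin I) M‖ * Real.sqrt (∑ i, (v i)^2)) := this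
    _ = ‖Matrix.toEuclideanCLM (𝕜 := ℝ) (n := Fin I) M‖^2 * (Real.sqrt (∑ i, (v i)^2) * Real.sqrt (∑ i, (v i)^2)) := by ring
    _ = ‖Matrix.toEuclideanCLM (𝕜 := ℝ) (n := Fin I) M‖^2 * ∑ i, (v i)^2 := by
        rw [Real.mul_self_sqrt hnn2]

lemma sN_matApp_le {I : ℕ} {κ : Type*} [Fintype κ] (M : Matrix (Fin I) (Fin I) ℝ)
    (x : Fin I → κ → ℝ) :
    sN (fun i => ∑ j, M i j • x j) ≤ ‖Matrix.toEuclideanCLM (𝕜 := ℝ) (n := Fin I) M‖ * sN x := by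
  set c := ‖Matrix.toEuclideanCLM (𝕜 := ℝ) (n := Fin I) M‖ with hc
  have hc0 : 0 ≤ c := norm_nonneg _
  have key : ∑ i, ∑ a, ((∑ j, M i j • x j) a)^2 ≤ c^2 * ∑ i, ∑ a, (x i a)^2 := by
    have swap1 : ∑ i, ∑ a, ((∑ j, M i j • x j) a)^2 = ∑ a, ∑ i, ((M *ᵥ fun j => x j a) i)^2 := by
      rw [Finset.sum_comm]
      refine Finset.sum_congr rfl fun a _ => Finset.sum_congr rfl fun i _ => ?_
      simp [Matrix.mulVec, dotProduct, Finset.sum_apply]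
    rw [swap1, Finset.sum_comm (f := fun (i : Fin I) (a : κ) => (x i a)^2), Finset.mul_sum]
    exact Finset.sum_le_sum fun a _ => sum_sq_mulVec_le M _
  rw [sN, sN]
  calc Real.sqrt (∑ i, ∑ a, ((∑ j, M i j • x j) a)^2) ≤ Real.sqrt (c^2 * ∑ i, ∑ a, (x i a)^2) :=
        Real.sqrt_le_sqrt key
    _ = c * Real.sqrt (∑ i, ∑ a, (x i a)^2) := by
        rw [Real.sqrt_mul (sq_nonneg c), Real.sqrt_sq hc0]

lemma pyth {I : ℕ} {κ : Type*} [Fintype κ] (x : Fin I → κ → ℝ) :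
    (∑ i, ∑ a, ((x i - (I:ℝ)⁻¹ • ∑ j, x j) a)^2) + (I:ℝ) * ∑ a, (((I:ℝ)⁻¹ • ∑ j, x j) a)^2
      = ∑ i, ∑ a, (x i a)^2 := by
  rcases Nat.eq_zero_or_pos I with hI | hI
  · subst hI; simp
  have hI0 : (I:ℝ) ≠ 0 := by positivity
  have key : ∀ a : κ, (∑ i, ((x i a) - (I:ℝ)⁻¹ * (∑ j, x j a))^2)
      + (I:ℝ) * ((I:ℝ)⁻¹ * (∑ j, x j a))^2 = ∑ i, (x i a)^2 := by
    intro a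
    set S := ∑ j, x j a with hS
    have expand : ∀ i, ((x i a) - (I:ℝ)⁻¹ * S)^2
        = (x i a)^2 - 2 * (I:ℝ)⁻¹ * S * (x i a) + ((I:ℝ)⁻¹ * S)^2 := fun i => by ring
    rw [Finset.sum_congr rfl (fun i _ => expand i)]
    rw [Finset.sum_add_distrib, Finset.sum_sub_distrib, ← Finset.mul_sum, ← hS,
      Finset.sum_const, Finset.card_univ, Fintype.card_fin, nsmul_eq_mul]
    field_simp
    ring
  rw [Finset.sum_comm (f := fun (i : Fin I) (a : κ) =>
    ((x i - (I:ℝ)⁻¹ • ∑ j, x j) a)^2)]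
  have h2 : ∀ a : κ, ((((I:ℝ)⁻¹ • ∑ j, x j) a)^2 : ℝ) = ((I:ℝ)⁻¹ * (∑ j, x j a))^2 := by
    intro a; simp [Finset.sum_apply]
  have h1 : ∀ i a, (((x i - (I:ℝ)⁻¹ • ∑ j, x j) a)^2 : ℝ)
      = ((x i a) - (I:ℝ)⁻¹ * (∑ j, x j a))^2 := by
    intro i a; simp [Finset.sum_apply]
  simp only [h1, h2]
  rw [Finset.mul_sum, ← Finset.sum_add_distrib]
  simp only [key]
  rw [Finset.sum_comm]

lemma sN_tilde_le {I : ℕ} {κ : Type*} [Fintype κ] (x : Fin I → κ → ℝ) :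
    sN (fun i => x i - (I:ℝ)⁻¹ • ∑ j, x j) ≤ sN x := by
  rw [sN, sN]
  apply Real.sqrt_le_sqrt
  rw [← pyth x]
  have : (0:ℝ) ≤ (I:ℝ) * ∑ a, (((I:ℝ)⁻¹ • ∑ j, x j) a)^2 := by positivity
  linarith

lemma sN_avg_le {I : ℕ} {κ : Type*} [Fintype κ] (x : Fin I → κ → ℝ) :
    sN (fun _ : Fin I => (I:ℝ)⁻¹ • ∑ j, x j) ≤ sN x := by
  rw [sN, sN]
  apply Real.sqrt_le_sqrt
  rw [← pyth x, Finset.sum_const, Finset.card_univ, Fintype.card_fin, nsmul_eq_mul]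
  have : (0:ℝ) ≤ ∑ i, ∑ a, ((x i - (I:ℝ)⁻¹ • ∑ j, x j) a)^2 := by positivity
  linarith

lemma sN_blockwise {I : ℕ} {κ κ' : Type*} [Fintype κ] [Fintype κ']
    (x : Fin I → κ → ℝ) (y : Fin I → κ' → ℝ) {c : ℝ} (hc : 0 ≤ c)
    (h : ∀ i, Real.sqrt (∑ a, (x i a)^2) ≤ c * Real.sqrt (∑ a, (y i a)^2)) :
    sN x ≤ c * sN y := by
  rw [sN, sN]
  have key : ∑ i, ∑ a, (x i a)^2 ≤ c^2 * ∑ i, ∑ a, (y i a)^2 := by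
    rw [Finset.mul_sum]
    refine Finset.sum_le_sum fun i _ => ?_
    have hi := h i
    have hx : (0:ℝ) ≤ ∑ a, (x i a)^2 := by positivity
    have hy : (0:ℝ) ≤ ∑ a, (y i a)^2 := by positivity
    have := mul_self_le_mul_self (Real.sqrt_nonneg _) hi
    rw [Real.mul_self_sqrt hx] at this
    calc ∑ a, (x i a)^2 ≤ c * Real.sqrt (∑ a, (y i a)^2) * (c * Real.sqrt (∑ a, (y i a)^2)) := this
      _ = c^2 * (Real.sqrt (∑ a, (y i a)^2) * Real.sqrt (∑ a, (y i a)^2)) := by ring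
      _ = c^2 * ∑ a, (y i a)^2 := by rw [Real.mul_self_sqrt hy]
  calc Real.sqrt (∑ i, ∑ a, (x i a)^2) ≤ Real.sqrt (c^2 * ∑ i, ∑ a, (y i a)^2) :=
        Real.sqrt_le_sqrt key
    _ = c * Real.sqrt (∑ i, ∑ a, (y i a)^2) := by
        rw [Real.sqrt_mul (sq_nonneg c), Real.sqrt_sq hc]

lemma tilde_matApp_eq {I : ℕ} {κ : Type*} [Fintype κ] (W : Matrix (Fin I) (Fin I) ℝ)
    (hW_row : ∀ i, ∑ j, W i j = 1) (hW_col : ∀ j, ∑ i, W i j = 1)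
    (x : Fin I → κ → ℝ) :
    (fun i => (∑ j, W i j • x j) - (I:ℝ)⁻¹ • ∑ i', (∑ j, W i' j • x j))
      = fun i => -(∑ j, ((I:ℝ)⁻¹ - W i j) • (x j - (I:ℝ)⁻¹ • ∑ j', x j')) := by
  funext i a
  have hI0 : (I:ℝ) ≠ 0 := by
    have : 0 < I := i.pos
    positivity
  have hcol : ∑ i', ∑ j, W i' j * x j a = ∑ j, x j a := by
    rw [Finset.sum_comm]
    refine Finset.sum_congr rfl fun j _ => ?_
    rw [← Finset.sum_mul, hW_col j, one_mul]
  simp only [Pi.sub_apply, Pi.smul_apply, Finset.sum_apply, Pi.neg_apply, smul_eq_mul]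
  rw [hcol]
  have lhs_eq : ∑ j, W i j * x j a - (I:ℝ)⁻¹ * ∑ j, x j a
      = ∑ j, W i j * (x j a - (I:ℝ)⁻¹ * ∑ j', x j' a) := by
    rw [Finset.sum_congr rfl (fun j _ => mul_sub (W i j) (x j a) ((I:ℝ)⁻¹ * ∑ j', x j' a)),
      Finset.sum_sub_distrib, ← Finset.sum_mul, hW_row i, one_mul]
  have hzero : ∑ j, (x j a - (I:ℝ)⁻¹ * ∑ j', x j' a) = 0 := by
    rw [Finset.sum_sub_distrib, Finset.sum_const, Finset.card_univ, Fintype.card_fin,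
      nsmul_eq_mul]
    field_simp
    ring
  have rhs_eq : -∑ j, ((I:ℝ)⁻¹ - W i j) * (x j a - (I:ℝ)⁻¹ * ∑ j', x j' a)
      = ∑ j, W i j * (x j a - (I:ℝ)⁻¹ * ∑ j', x j' a) := by
    rw [Finset.sum_congr rfl (fun j _ =>
        sub_mul ((I:ℝ)⁻¹) (W i j) (x j a - (I:ℝ)⁻¹ * ∑ j', x j' a)),
      Finset.sum_sub_distrib, ← Finset.mul_sum, hzero, mul_zero, zero_sub, neg_neg]
  rw [lhs_eq, rhs_eq]

lemma vecNorm_orth {N : ℕ} {U : Matrix (Fin N) (Fin N) ℝ} (hU : Uᵀ * U = 1)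
    (w : Fin N → ℝ) : vecNorm (U *ᵥ w) = vecNorm w := by
  unfold vecNorm
  congr 1
  calc (U *ᵥ w) ⬝ᵥ (U *ᵥ w) = ((U *ᵥ w) ᵥ* U) ⬝ᵥ w := dotProduct_mulVec _ _ _
    _ = (Uᵀ *ᵥ (U *ᵥ w)) ⬝ᵥ w := by rw [mulVec_transpose]
    _ = ((Uᵀ * U) *ᵥ w) ⬝ᵥ w := by rw [mulVec_mulVec]
    _ = w ⬝ᵥ w := by rw [hU, one_mulVec]

lemma floorMap_inv_bound {N : ℕ} {β : ℝ} (hβ : 0 < β) {H : Matrix (Fin N) (Fin N) ℝ}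
    (hH : H.IsHermitian) (v : Fin N → ℝ) :
    vecNorm ((floorMap β H)⁻¹ *ᵥ v) ≤ β * vecNorm v := by
  set U : Matrix (Fin N) (Fin N) ℝ := (hH.eigenvectorUnitary : Matrix (Fin N) (Fin N) ℝ) with hUdef
  set d : Fin N → ℝ := fun i => max (hH.eigenvalues i) β⁻¹ with hddef
  have hdpos : ∀ i, 0 < d i := fun i => lt_of_lt_of_le (inv_pos.mpr hβ) (le_max_right _ _)
  have hstarU : star U = Uᵀ := conjTranspose_eq_transpose_of_trivial U
  have hUU : U * star U = 1 := Matrix.mem_unitaryGroup_iff.mp hH.eigenvectorUnitary.2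
  have hUU' : star U * U = 1 := Matrix.mem_unitaryGroup_iff'.mp hH.eigenvectorUnitary.2
  have hfl : floorMap β H = U * Matrix.diagonal d * star U := by
    rw [floorMap, dif_pos hH]
  have hinv : (floorMap β H)⁻¹ = U * Matrix.diagonal (fun i => (d i)⁻¹) * star U := by
    apply Matrix.inv_eq_right_inv
    rw [hfl]
    calc U * Matrix.diagonal d * star U * (U * Matrix.diagonal (fun i => (d i)⁻¹) * star U)
        = U * Matrix.diagonal d * (star U * U) * Matrix.diagonal (fun i => (d i)⁻¹) * star U := by
          noncomm_ring
      _ = U * (Matrix.diagonal d * Matrix.diagonal (fun i => (d i)⁻¹)) * star U := by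
          rw [hUU']; noncomm_ring
      _ = 1 := by
          rw [Matrix.diagonal_mul_diagonal]
          have : (fun i => d i * (d i)⁻¹) = fun _ => (1:ℝ) := by
            funext i; exact mul_inv_cancel₀ (hdpos i).ne'
          rw [this, Matrix.diagonal_one, Matrix.mul_one, hUU]
  have hdiag : ∀ w : Fin N → ℝ,
      vecNorm (Matrix.diagonal (fun i => (d i)⁻¹) *ᵥ w) ≤ β * vecNorm w := by
    intro w
    rw [vecNorm_eq_sqrt, vecNorm_eq_sqrt]
    have key : ∑ a, ((Matrix.diagonal (fun i => (d i)⁻¹) *ᵥ w) a)^2 ≤ β^2 * ∑ a, (w a)^2 := by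
      rw [Finset.mul_sum]
      refine Finset.sum_le_sum fun a _ => ?_
      rw [Matrix.mulVec_diagonal]
      have h1 : (d a)⁻¹ ≤ β := by
        have := inv_anti₀ (inv_pos.mpr hβ) (le_max_right (hH.eigenvalues a) β⁻¹)
        simpa using this
      have h2 : 0 < (d a)⁻¹ := inv_pos.mpr (hdpos a)
      calc ((d a)⁻¹ * w a)^2 = ((d a)⁻¹)^2 * (w a)^2 := by ring
        _ ≤ β^2 * (w a)^2 := by
            apply mul_le_mul_of_nonneg_right _ (sq_nonneg _)
            exact pow_le_pow_left₀ h2.le h1 2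
    calc Real.sqrt (∑ a, ((Matrix.diagonal (fun i => (d i)⁻¹) *ᵥ w) a)^2)
        ≤ Real.sqrt (β^2 * ∑ a, (w a)^2) := Real.sqrt_le_sqrt key
      _ = β * Real.sqrt (∑ a, (w a)^2) := by
          rw [Real.sqrt_mul (sq_nonneg β), Real.sqrt_sq hβ.le]
  have horthT : Uᵀ * U = 1 := by rw [← hstarU]; exact hUU'
  have horthT2 : (Uᵀ)ᵀ * Uᵀ = 1 := by rw [Matrix.transpose_transpose, ← hstarU]; exact hUU
  calc vecNorm ((floorMap β H)⁻¹ *ᵥ v)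
      = vecNorm (U *ᵥ (Matrix.diagonal (fun i => (d i)⁻¹) *ᵥ (star U *ᵥ v))) := by
        rw [hinv, ← Matrix.mulVec_mulVec, ← Matrix.mulVec_mulVec]
    _ = vecNorm (Matrix.diagonal (fun i => (d i)⁻¹) *ᵥ (star U *ᵥ v)) := vecNorm_orth horthT _
    _ ≤ β * vecNorm (star U *ᵥ v) := hdiag _
    _ = β * vecNorm v := by
        rw [hstarU, vecNorm_orth horthT2]

lemma Gf_eq_fderiv {N : ℕ} (f : (Fin N → ℝ) → ℝ) (Gf : (Fin N → ℝ) → (Fin N → ℝ))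
    (hGf : ∀ xv v, fderiv ℝ f xv v = Gf xv ⬝ᵥ v) :
    Gf = fun z n => fderiv ℝ f z (Pi.single n 1) := by
  funext z n
  have := hGf z (Pi.single n 1)
  rw [dotProduct_single, mul_one] at this
  exact this.symm

lemma Gf_contDiff {N : ℕ} (f : (Fin N → ℝ) → ℝ) (Gf : (Fin N → ℝ) → (Fin N → ℝ))
    (hC2 : ContDiff ℝ 2 f) (hGf : ∀ xv v, fderiv ℝ f xv v = Gf xv ⬝ᵥ v) :
    ContDiff ℝ 1 Gf := by
  rw [Gf_eq_fderiv f Gf hGf]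
  have h1 : ContDiff ℝ 1 (fderiv ℝ f) := hC2.fderiv_right (by norm_num)
  apply contDiff_pi.2
  intro n
  exact (ContinuousLinearMap.apply ℝ ℝ (Pi.single n 1)).contDiff.comp h1

lemma grad_lipschitz {N : ℕ} (f : (Fin N → ℝ) → ℝ) (Gf : (Fin N → ℝ) → (Fin N → ℝ))
    (Hf : (Fin N → ℝ) → Matrix (Fin N) (Fin N) ℝ) {γ : ℝ} (hγ : 0 ≤ γ)
    (hC2 : ContDiff ℝ 2 f) (hGf : ∀ xv v, fderiv ℝ f xv v = Gf xv ⬝ᵥ v)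
    (hHf : ∀ xv v, fderiv ℝ Gf xv v = Hf xv *ᵥ v)
    (hHbd : ∀ xv v, vecNorm (Hf xv *ᵥ v) ≤ γ * vecNorm v)
    (a b : Fin N → ℝ) : vecNorm (Gf a - Gf b) ≤ γ * vecNorm (a - b) := by
  set φ : (Fin N → ℝ) ≃L[ℝ] EuclideanSpace ℝ (Fin N) := (EuclideanSpace.equiv (Fin N) ℝ).symm
    with hφ
  have hGd : Differentiable ℝ Gf := (Gf_contDiff f Gf hC2 hGf).differentiable one_ne_zero
  set F : EuclideanSpace ℝ (Fin N) → EuclideanSpace ℝ (Fin N) :=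
    fun z => φ (Gf (φ.symm z)) with hF
  have hφnorm : ∀ u : Fin N → ℝ, ‖φ u‖ = vecNorm u := fun u => (vecNorm_eq_norm u).symm
  have hD : ∀ z : EuclideanSpace ℝ (Fin N), HasFDerivAt F
      (((φ : (Fin N → ℝ) →L[ℝ] EuclideanSpace ℝ (Fin N))).comp
        ((fderiv ℝ Gf (φ.symm z)).comp
          (φ.symm : EuclideanSpace ℝ (Fin N) →L[ℝ] (Fin N → ℝ)))) z := by
    intro z
    have h1 : HasFDerivAt (φ.symm : EuclideanSpace ℝ (Fin N) → (Fin N → ℝ))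
        (φ.symm : EuclideanSpace ℝ (Fin N) →L[ℝ] (Fin N → ℝ)) z := φ.symm.hasFDerivAt
    have h2 : HasFDerivAt Gf (fderiv ℝ Gf (φ.symm z)) (φ.symm z) :=
      (hGd (φ.symm z)).hasFDerivAt
    have h3 : HasFDerivAt (φ : (Fin N → ℝ) → EuclideanSpace ℝ (Fin N))
        (φ : (Fin N → ℝ) →L[ℝ] EuclideanSpace ℝ (Fin N)) (Gf (φ.symm z)) := φ.hasFDerivAt
    exact h3.comp z (h2.comp z h1)
  have hbound : ∀ z : EuclideanSpace ℝ (Fin N),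
      ‖(((φ : (Fin N → ℝ) →L[ℝ] EuclideanSpace ℝ (Fin N))).comp
        ((fderiv ℝ Gf (φ.symm z)).comp
          (φ.symm : EuclideanSpace ℝ (Fin N) →L[ℝ] (Fin N → ℝ))))‖ ≤ γ := by
    intro z
    apply ContinuousLinearMap.opNorm_le_bound _ hγ
    intro w
    have : (((φ : (Fin N → ℝ) →L[ℝ] EuclideanSpace ℝ (Fin N))).comp
        ((fderiv ℝ Gf (φ.symm z)).comp
          (φ.symm : EuclideanSpace ℝ (Fin N) →L[ℝ] (Fin N → ℝ)))) w
        = φ (Hf (φ.symm z) *ᵥ (φ.symm w)) := by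
      simp only [ContinuousLinearMap.coe_comp', Function.comp_apply,
        ContinuousLinearEquiv.coe_coe]
      rw [hHf]
    rw [this, hφnorm]
    have hw : ‖w‖ = vecNorm (φ.symm w) := by
      rw [← hφnorm (φ.symm w), φ.apply_symm_apply]
    rw [hw]
    exact hHbd _ _
  have key := Convex.norm_image_sub_le_of_norm_hasFDerivWithin_le
    (fun z (_ : z ∈ (Set.univ : Set (EuclideanSpace ℝ (Fin N)))) =>
      (hD z).hasFDerivWithinAt)
    (fun z _ => hbound z) convex_univ (Set.mem_univ (φ b)) (Set.mem_univ (φ a))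
  have hFa : F (φ a) = φ (Gf a) := by rw [hF]; simp
  have hFb : F (φ b) = φ (Gf b) := by rw [hF]; simp
  rw [hFa, hFb] at key
  have h1 : φ (Gf a) - φ (Gf b) = φ (Gf a - Gf b) := (map_sub φ _ _).symm
  have h2 : φ a - φ b = φ (a - b) := (map_sub φ _ _).symm
  rw [h1, h2, hφnorm, hφnorm] at key
  exact key

lemma Hf_symm {N : ℕ} (f : (Fin N → ℝ) → ℝ) (Gf : (Fin N → ℝ) → (Fin N → ℝ))
    (Hf : (Fin N → ℝ) → Matrix (Fin N) (Fin N) ℝ)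
    (hC2 : ContDiff ℝ 2 f) (hGf : ∀ xv v, fderiv ℝ f xv v = Gf xv ⬝ᵥ v)
    (hHf : ∀ xv v, fderiv ℝ Gf xv v = Hf xv *ᵥ v)
    (xv : Fin N → ℝ) : (Hf xv).IsHermitian := by
  have hGd : Differentiable ℝ Gf := (Gf_contDiff f Gf hC2 hGf).differentiable one_ne_zero
  have h1 : ContDiff ℝ 1 (fderiv ℝ f) := hC2.fderiv_right (by norm_num)
  have hcoord : ∀ n : Fin N, DifferentiableAt ℝ (fun z : Fin N → ℝ => Gf z n) xv := by
    intro n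
    exact ((ContinuousLinearMap.proj (R := ℝ) (φ := fun _ : Fin N => ℝ)
      n).differentiableAt).comp xv (hGd xv)
  have key : ∀ a b : Fin N, Hf xv a b
      = fderiv ℝ (fderiv ℝ f) xv (Pi.single b 1) (Pi.single a 1) := by
    intro a b
    have e1 : Hf xv a b = fderiv ℝ Gf xv (Pi.single b 1) a := by
      rw [hHf]; simp [Matrix.mulVec_single]
    have e2 : fderiv ℝ Gf xv (Pi.single b 1) a
        = fderiv ℝ (fun z => Gf z a) xv (Pi.single b 1) := by
      have hpi := fderiv_pi (𝕜 := ℝ) (φ := fun (n : Fin N) (z : Fin N → ℝ) => Gf z n)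
        (x := xv) hcoord
      have : fderiv ℝ Gf xv = fderiv ℝ (fun (z : Fin N → ℝ) (n : Fin N) => Gf z n) xv := rfl
      rw [this, hpi]
      rfl
    have e3 : fderiv ℝ (fun z => Gf z a) xv (Pi.single b 1)
        = fderiv ℝ (fderiv ℝ f) xv (Pi.single b 1) (Pi.single a 1) := by
      have hGfa : (fun z : Fin N → ℝ => Gf z a)
          = fun z => (ContinuousLinearMap.apply ℝ ℝ (Pi.single a 1)) (fderiv ℝ f z) := by
        rw [Gf_eq_fderiv f Gf hGf]
        rfl
      rw [hGfa]
      have hdf : DifferentiableAt ℝ (fderiv ℝ f) xv := (h1.differentiable one_ne_zero) xv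
      have hd2 : DifferentiableAt ℝ (⇑(ContinuousLinearMap.apply ℝ ℝ (Pi.single a 1)))
          (fderiv ℝ f xv) := ContinuousLinearMap.differentiableAt (𝕜 := ℝ)
          (f := ContinuousLinearMap.apply ℝ ℝ (Pi.single a 1)) (x := fderiv ℝ f xv)
      have hcomp := fderiv_comp (𝕜 := ℝ)
        (g := ⇑(ContinuousLinearMap.apply ℝ ℝ (Pi.single a 1)))
        (f := fderiv ℝ f) xv hd2 hdf
      rw [show (fun z => (ContinuousLinearMap.apply ℝ ℝ (Pi.single a 1)) (fderiv ℝ f z))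
        = ⇑(ContinuousLinearMap.apply ℝ ℝ (Pi.single a 1)) ∘ fderiv ℝ f from rfl,
        hcomp, ContinuousLinearMap.fderiv]
      simp
    rw [e1, e2, e3]
  have hsym : IsSymmSndFDerivAt ℝ f xv :=
    (hC2.contDiffAt).isSymmSndFDerivAt (by norm_num)
  unfold Matrix.IsHermitian
  ext a b
  rw [Matrix.conjTranspose_apply]
  rw [key a b, key b a]
  rw [hsym.eq]
  simp
-- new glue lemmas
lemma sN_sub_le {I : ℕ} {κ : Type*} [Fintype κ] (x y : Fin I → κ → ℝ) :
    sN (fun i => x i - y i) ≤ sN x + sN y := by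
  have h := sN_add_le x (fun i => -(y i))
  have e : (fun i => x i + -(y i)) = fun i => x i - y i := by
    funext i; exact (sub_eq_add_neg _ _).symm
  rw [e] at h
  rw [sN_neg] at h
  exact h

lemma sN_tildeW_le {I : ℕ} {κ : Type*} [Fintype κ] (W : Matrix (Fin I) (Fin I) ℝ)
    (hW_row : ∀ i, ∑ j, W i j = 1) (hW_col : ∀ j, ∑ i, W i j = 1)
    (x : Fin I → κ → ℝ) :
    sN (fun i => (∑ j, W i j • x j) - (I:ℝ)⁻¹ • ∑ i', (∑ j, W i' j • x j))
      ≤ ‖Matrix.toEuclideanCLM (𝕜 := ℝ) (n := Fin I) ((Matrix.of fun _ _ => (I:ℝ)⁻¹) - W)‖ *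
        sN (fun i => x i - (I:ℝ)⁻¹ • ∑ j', x j') := by
  rw [tilde_matApp_eq W hW_row hW_col x]
  set M : Matrix (Fin I) (Fin I) ℝ := (Matrix.of fun _ _ => (I:ℝ)⁻¹) - W with hM
  have hMij : ∀ i j, (I:ℝ)⁻¹ - W i j = M i j := by
    intro i j; rw [hM, Matrix.sub_apply, Matrix.of_apply]
  have e : (fun i => ∑ j, ((I:ℝ)⁻¹ - W i j) • (x j - (I:ℝ)⁻¹ • ∑ j', x j'))
      = fun i => ∑ j, M i j • ((fun j => x j - (I:ℝ)⁻¹ • ∑ j', x j') j) := by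
    funext i
    exact Finset.sum_congr rfl fun j _ => by rw [hMij i j]
  calc sN (fun i => -(∑ j, ((I:ℝ)⁻¹ - W i j) • (x j - (I:ℝ)⁻¹ • ∑ j', x j')))
      = sN (fun i => ∑ j, ((I:ℝ)⁻¹ - W i j) • (x j - (I:ℝ)⁻¹ • ∑ j', x j')) :=
        sN_neg (fun i => ∑ j, ((I:ℝ)⁻¹ - W i j) • (x j - (I:ℝ)⁻¹ • ∑ j', x j'))
    _ ≤ _ := by rw [e]; exact sN_matApp_le M _

lemma isHermitian_of_symm {n : ℕ} {A : Matrix (Fin n) (Fin n) ℝ} (h : ∀ a b, A a b = A b a) :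
    A.IsHermitian := by
  ext a b
  rw [Matrix.conjTranspose_apply]
  simp [h a b]

lemma symm_of_isHermitian {n : ℕ} {A : Matrix (Fin n) (Fin n) ℝ} (h : A.IsHermitian)
    (a b : Fin n) : A a b = A b a := by
  conv_lhs => rw [← h]
  rw [Matrix.conjTranspose_apply]
  simp

lemma sum_one_smul {I : ℕ} {κ : Type*} [Fintype κ] (z : Fin I → κ → ℝ) (i : Fin I) :
    ∑ j, (1 : Matrix (Fin I) (Fin I) ℝ) i j • z j = z i := by
  rw [Finset.sum_congr rfl (fun j _ => by rw [Matrix.one_apply] :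
    ∀ j ∈ Finset.univ, (1 : Matrix (Fin I) (Fin I) ℝ) i j • z j
      = (if i = j then (1:ℝ) else 0) • z j)]
  simp [ite_smul]

/-- one-step consensus-error bounds from the proof of Lemma 5 of the
paper, in unweighted norms. With `η = ‖I - W‖` and `υ = ‖A - W‖` (Euclidean operator
norms), the consensus errors of the distributed Newton recursions satisfy
(i) `‖x̃_{k+1}‖ ≤ υ‖x̃_k‖ + α_kβ‖g_k‖`;
(ii) `‖g̃_{k+1}‖ ≤ υ(‖g̃_k‖ + γη‖x̃_k‖ + α_kγβ‖g_k‖)`;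
(iii) `‖h̃_{k+1}‖_F ≤ υ(‖h̃_k‖_F + δη‖x̃_k‖ + α_kδβ‖g_k‖)`;
where `‖g_k‖ ≤ G_k + γ‖x̃_k‖ + ‖g̃_k‖`. -/
theorem stmt_17 {I N : ℕ}
    (f : Fin I → (Fin N → ℝ) → ℝ)
    (Gf : Fin I → (Fin N → ℝ) → (Fin N → ℝ))
    (Hf : Fin I → (Fin N → ℝ) → Matrix (Fin N) (Fin N) ℝ)
    (hC2 : ∀ i, ContDiff ℝ 2 (f i))
    (hGf : ∀ i xv v, fderiv ℝ (f i) xv v = Gf i xv ⬝ᵥ v)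
    (hHf : ∀ i xv v, fderiv ℝ (Gf i) xv v = Hf i xv *ᵥ v)
    (W : Matrix (Fin I) (Fin I) ℝ)
    (hW_nonneg : ∀ i j, 0 ≤ W i j)
    (hW_row : ∀ i, ∑ j, W i j = 1)
    (hW_col : ∀ j, ∑ i, W i j = 1)
    (β γ δ : ℝ) (hβ : 0 < β) (hγ : 0 < γ) (hδ : 0 < δ)
    -- `‖∇²fⁱ(x)‖ ≤ γ` (operator norm bound)
    (hHbd : ∀ i xv v, vecNorm (Hf i xv *ᵥ v) ≤ γ * vecNorm v)
    -- `‖∇²fⁱ(x) - ∇²fⁱ(y)‖_F ≤ δ‖x - y‖`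
    (hHlip : ∀ i xv yv,
      Real.sqrt (∑ a, ∑ b, (Hf i xv a b - Hf i yv a b) ^ 2) ≤ δ * vecNorm (xv - yv))
    (α : ℕ → ℝ) (hα : ∀ k ≥ 1, 0 ≤ α k)
    (x g : ℕ → Fin I → (Fin N → ℝ))
    (hmat : ℕ → Fin I → Matrix (Fin N) (Fin N) ℝ)
    (hginit : g 1 = fun i => Gf i (x 1 i))
    (hhinit : hmat 1 = fun i => Hf i (x 1 i))
    (hxrec : ∀ k ≥ 1, x (k + 1) = fun i =>
      (∑ j, W i j • x k j) - α k • ((floorMap β (hmat k i))⁻¹ *ᵥ g k i))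
    (hgrec : ∀ k ≥ 1, g (k + 1) = fun i =>
      ∑ j, W i j • (g k j + Gf j (x (k + 1) j) - Gf j (x k j)))
    (hhrec : ∀ k ≥ 1, hmat (k + 1) = fun i =>
      ∑ j, W i j • (hmat k j + Hf j (x (k + 1) j) - Hf j (x k j)))
    -- derived quantities
    (barx : ℕ → Fin N → ℝ) (hbarx : ∀ k, barx k = (I : ℝ)⁻¹ • ∑ i, x k i)
    (tx tg th G : ℕ → ℝ)
    (htx : ∀ k, tx k = stackNorm (fun i => x k i - barx k))
    (htg : ∀ k, tg k = stackNorm (fun i => g k i - (I : ℝ)⁻¹ • ∑ j, g k j))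
    (hth : ∀ k, th k = stackFrobNorm (fun i => hmat k i - (I : ℝ)⁻¹ • ∑ j, hmat k j))
    (hG : ∀ k, G k = stackNorm (fun _ : Fin I => (I : ℝ)⁻¹ • ∑ j, Gf j (barx k)))
    -- operator norms `η = ‖I - W‖`, `υ = ‖A - W‖`
    (η υ : ℝ)
    (hη : η = ‖Matrix.toEuclideanCLM (𝕜 := ℝ) (n := Fin I) (1 - W)‖)
    (hυ : υ = ‖Matrix.toEuclideanCLM (𝕜 := ℝ) (n := Fin I)
      ((Matrix.of fun _ _ => (I : ℝ)⁻¹) - W)‖) :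
    ∀ k ≥ 1,
      tx (k + 1) ≤ υ * tx k + α k * β * stackNorm (g k) ∧
      tg (k + 1) ≤ υ * (tg k + γ * η * tx k + α k * γ * β * stackNorm (g k)) ∧
      th (k + 1) ≤ υ * (th k + δ * η * tx k + α k * δ * β * stackNorm (g k)) ∧
      stackNorm (g k) ≤ G k + γ * tx k + tg k := by
  -- Hermitian-ness of the tracked Hessians
  have hferm : ∀ i xv, (Hf i xv).IsHermitian := fun i xv =>
    Hf_symm (f i) (Gf i) (Hf i) (hC2 i) (hGf i) (hHf i) xv
  have hherm : ∀ k', 1 ≤ k' → ∀ i, (hmat k' i).IsHermitian := by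
    intro k' hk'
    induction k', hk' using Nat.le_induction with
    | base =>
      intro i
      simp only [hhinit]
      exact hferm i _
    | succ n hn ih =>
      intro i
      apply isHermitian_of_symm
      intro a b
      simp only [hhrec n hn, Matrix.sum_apply, Matrix.smul_apply, Matrix.add_apply,
        Matrix.sub_apply, smul_eq_mul]
      refine Finset.sum_congr rfl fun j _ => ?_
      rw [symm_of_isHermitian (ih j) a b, symm_of_isHermitian (hferm j _) a b,
        symm_of_isHermitian (hferm j _) a b]
  -- gradient tracking invariant
  have htrack : ∀ k', 1 ≤ k' → ∑ j, g k' j = ∑ j, Gf j (x k' j) := by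
    intro k' hk'
    induction k', hk' using Nat.le_induction with
    | base => simp only [hginit]
    | succ n hn ih =>
      simp only [hgrec n hn]
      rw [Finset.sum_comm]
      have e1 : ∀ j ∈ Finset.univ, (∑ i, W i j • (g n j + Gf j (x (n + 1) j) - Gf j (x n j)))
          = g n j + Gf j (x (n + 1) j) - Gf j (x n j) := by
        intro j _
        rw [← Finset.sum_smul, hW_col j, one_smul]
      rw [Finset.sum_congr rfl e1, Finset.sum_sub_distrib, Finset.sum_add_distrib, ih]
      abel
  intro k hk
  have hα0 : 0 ≤ α k := hα k hk
  have hη0 : 0 ≤ η := hη ▸ norm_nonneg _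
  have hυ0 : 0 ≤ υ := hυ ▸ norm_nonneg _
  have hsg : stackNorm (g k) = sN (g k) := stackNorm_eq_sN _
  have htxm : tx k = sN (fun i => x k i - (I:ℝ)⁻¹ • ∑ j, x k j) := by
    rw [htx k, stackNorm_eq_sN, hbarx k]
  have htgm : tg k = sN (fun i => g k i - (I:ℝ)⁻¹ • ∑ j, g k j) := by
    rw [htg k, stackNorm_eq_sN]
  -- bound on the preconditioned gradient
  have hBg : sN (fun i => (floorMap β (hmat k i))⁻¹ *ᵥ g k i) ≤ β * sN (g k) := by
    apply sN_blockwise _ _ hβ.le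
    intro i
    rw [← vecNorm_eq_sqrt, ← vecNorm_eq_sqrt]
    exact floorMap_inv_bound hβ (hherm k hk i) (g k i)
  -- (iv)
  have hiv : stackNorm (g k) ≤ G k + γ * tx k + tg k := by
    have hdec : (fun i => g k i) = fun i =>
        (g k i - (I:ℝ)⁻¹ • ∑ j, g k j) +
        (((I:ℝ)⁻¹ • ∑ j, Gf j (barx k)) +
         ((I:ℝ)⁻¹ • ∑ j, (Gf j (x k j) - Gf j (barx k)))) := by
      funext i
      rw [Finset.sum_sub_distrib, htrack k hk]
      module
    have step1 : sN (g k) ≤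
        sN (fun i => g k i - (I:ℝ)⁻¹ • ∑ j, g k j) +
        (sN (fun _ : Fin I => (I:ℝ)⁻¹ • ∑ j, Gf j (barx k)) +
         sN (fun _ : Fin I => (I:ℝ)⁻¹ • ∑ j, (Gf j (x k j) - Gf j (barx k)))) := by
      calc sN (g k) = sN (fun i =>
            (g k i - (I:ℝ)⁻¹ • ∑ j, g k j) +
            (((I:ℝ)⁻¹ • ∑ j, Gf j (barx k)) +
             ((I:ℝ)⁻¹ • ∑ j, (Gf j (x k j) - Gf j (barx k))))) := by rw [← hdec]
        _ ≤ sN (fun i => g k i - (I:ℝ)⁻¹ • ∑ j, g k j) +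
            sN (fun _ : Fin I => ((I:ℝ)⁻¹ • ∑ j, Gf j (barx k)) +
              ((I:ℝ)⁻¹ • ∑ j, (Gf j (x k j) - Gf j (barx k)))) := sN_add_le _ _
        _ ≤ _ := by
            gcongr
            exact sN_add_le (fun _ : Fin I => (I:ℝ)⁻¹ • ∑ j, Gf j (barx k))
              (fun _ : Fin I => (I:ℝ)⁻¹ • ∑ j, (Gf j (x k j) - Gf j (barx k)))
    have hT3 : sN (fun _ : Fin I => (I:ℝ)⁻¹ • ∑ j, (Gf j (x k j) - Gf j (barx k)))
        ≤ γ * tx k := by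
      calc sN (fun _ : Fin I => (I:ℝ)⁻¹ • ∑ j, (Gf j (x k j) - Gf j (barx k)))
          ≤ sN (fun j => Gf j (x k j) - Gf j (barx k)) := sN_avg_le _
        _ ≤ γ * sN (fun j => x k j - barx k) := by
            apply sN_blockwise _ _ hγ.le
            intro i
            rw [← vecNorm_eq_sqrt, ← vecNorm_eq_sqrt]
            exact grad_lipschitz (f i) (Gf i) (Hf i) hγ.le (hC2 i) (hGf i) (hHf i)
              (hHbd i) (x k i) (barx k)
        _ = γ * tx k := by rw [htx k, stackNorm_eq_sN]
    rw [hsg]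
    have hT2 : sN (fun _ : Fin I => (I:ℝ)⁻¹ • ∑ j, Gf j (barx k)) = G k := by
      rw [hG k, stackNorm_eq_sN]
    rw [← htgm] at step1
    rw [hT2] at step1
    linarith
  -- difference bound (shared by (ii) and (iii))
  have hdiffbd : sN (fun j => x (k+1) j - x k j)
      ≤ η * tx k + α k * (β * sN (g k)) := by
    have e3 : (fun j => x (k+1) j - x k j) = fun j =>
        (∑ j', (W - 1) j j' • (x k j' - (I:ℝ)⁻¹ • ∑ l, x k l))
          - α k • ((floorMap β (hmat k j))⁻¹ *ᵥ g k j) := by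
      funext j
      simp only [hxrec k hk]
      have hsum : (∑ j', (W - 1) j j' • (x k j' - (I:ℝ)⁻¹ • ∑ l, x k l))
          = (∑ j', W j j' • x k j') - x k j := by
        have e1 : ∀ j' ∈ Finset.univ, (W - 1) j j' • (x k j' - (I:ℝ)⁻¹ • ∑ l, x k l)
            = W j j' • (x k j' - (I:ℝ)⁻¹ • ∑ l, x k l)
              - (1 : Matrix (Fin I) (Fin I) ℝ) j j' • (x k j' - (I:ℝ)⁻¹ • ∑ l, x k l) :=
          fun j' _ => by rw [Matrix.sub_apply, sub_smul]
        rw [Finset.sum_congr rfl e1, Finset.sum_sub_distrib, sum_one_smul]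
        have e2 : ∀ j' ∈ Finset.univ, W j j' • (x k j' - (I:ℝ)⁻¹ • ∑ l, x k l)
            = W j j' • x k j' - W j j' • ((I:ℝ)⁻¹ • ∑ l, x k l) := fun j' _ => smul_sub _ _ _
        rw [Finset.sum_congr rfl e2, Finset.sum_sub_distrib, ← Finset.sum_smul, hW_row j,
          one_smul]
        abel
      rw [hsum]
      abel
    have hnormW1 : ‖Matrix.toEuclideanCLM (𝕜 := ℝ) (n := Fin I) (W - 1)‖ = η := by
      rw [hη]
      have e : W - 1 = -(1 - W) := by rw [neg_sub]
      rw [e, map_neg, norm_neg]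
    calc sN (fun j => x (k+1) j - x k j)
        = sN (fun j => (∑ j', (W - 1) j j' • (x k j' - (I:ℝ)⁻¹ • ∑ l, x k l))
            - α k • ((floorMap β (hmat k j))⁻¹ *ᵥ g k j)) := by rw [e3]
      _ ≤ sN (fun j => ∑ j', (W - 1) j j' • (x k j' - (I:ℝ)⁻¹ • ∑ l, x k l))
          + sN (fun j => α k • ((floorMap β (hmat k j))⁻¹ *ᵥ g k j)) := sN_sub_le _ _
      _ ≤ η * tx k + α k * (β * sN (g k)) := by
          apply add_le_add
          · calc sN (fun j => ∑ j', (W - 1) j j' • (x k j' - (I:ℝ)⁻¹ • ∑ l, x k l))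
                ≤ ‖Matrix.toEuclideanCLM (𝕜 := ℝ) (n := Fin I) (W - 1)‖ *
                  sN (fun j' => x k j' - (I:ℝ)⁻¹ • ∑ l, x k l) := sN_matApp_le (W - 1) _
              _ = η * tx k := by rw [hnormW1, ← htxm]
          · calc sN (fun j => α k • ((floorMap β (hmat k j))⁻¹ *ᵥ g k j))
                = |α k| * sN (fun j => (floorMap β (hmat k j))⁻¹ *ᵥ g k j) := sN_smul _ _
              _ ≤ α k * (β * sN (g k)) := by
                  rw [abs_of_nonneg hα0]
                  exact mul_le_mul_of_nonneg_left hBg hα0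
  refine ⟨?_, ?_, ?_, hiv⟩
  · -- (i)
    have htx1 : tx (k+1) = sN (fun i => x (k+1) i - (I:ℝ)⁻¹ • ∑ j, x (k+1) j) := by
      rw [htx, stackNorm_eq_sN, hbarx]
    have hsplit : (fun i => x (k+1) i - (I:ℝ)⁻¹ • ∑ j, x (k+1) j)
        = fun i => ((∑ j, W i j • x k j) - (I:ℝ)⁻¹ • ∑ i', (∑ j, W i' j • x k j))
            - α k • (((floorMap β (hmat k i))⁻¹ *ᵥ g k i)
              - (I:ℝ)⁻¹ • ∑ j, ((floorMap β (hmat k j))⁻¹ *ᵥ g k j)) := by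
      funext i
      simp only [hxrec k hk]
      rw [Finset.sum_sub_distrib]
      have : ∑ j, α k • ((floorMap β (hmat k j))⁻¹ *ᵥ g k j)
          = α k • ∑ j, ((floorMap β (hmat k j))⁻¹ *ᵥ g k j) := (Finset.smul_sum).symm
      rw [this]
      module
    rw [htx1, hsplit]
    calc sN (fun i => ((∑ j, W i j • x k j) - (I:ℝ)⁻¹ • ∑ i', (∑ j, W i' j • x k j))
            - α k • (((floorMap β (hmat k i))⁻¹ *ᵥ g k i)
              - (I:ℝ)⁻¹ • ∑ j, ((floorMap β (hmat k j))⁻¹ *ᵥ g k j)))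
        ≤ sN (fun i => (∑ j, W i j • x k j) - (I:ℝ)⁻¹ • ∑ i', (∑ j, W i' j • x k j))
          + sN (fun i => α k • (((floorMap β (hmat k i))⁻¹ *ᵥ g k i)
              - (I:ℝ)⁻¹ • ∑ j, ((floorMap β (hmat k j))⁻¹ *ᵥ g k j))) := sN_sub_le _ _
      _ ≤ υ * tx k + α k * β * stackNorm (g k) := by
          apply add_le_add
          · calc sN (fun i => (∑ j, W i j • x k j) - (I:ℝ)⁻¹ • ∑ i', (∑ j, W i' j • x k j))
                ≤ ‖Matrix.toEuclideanCLM (𝕜 := ℝ) (n := Fin I)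
                    ((Matrix.of fun _ _ => (I:ℝ)⁻¹) - W)‖ *
                  sN (fun i => x k i - (I:ℝ)⁻¹ • ∑ j', x k j') :=
                  sN_tildeW_le W hW_row hW_col (x k)
              _ = υ * tx k := by rw [← hυ, ← htxm]
          · calc sN (fun i => α k • (((floorMap β (hmat k i))⁻¹ *ᵥ g k i)
                  - (I:ℝ)⁻¹ • ∑ j, ((floorMap β (hmat k j))⁻¹ *ᵥ g k j)))
                = |α k| * sN (fun i => ((floorMap β (hmat k i))⁻¹ *ᵥ g k i)
                  - (I:ℝ)⁻¹ • ∑ j, ((floorMap β (hmat k j))⁻¹ *ᵥ g k j)) := sN_smul _ _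
              _ ≤ α k * (β * sN (g k)) := by
                  rw [abs_of_nonneg hα0]
                  apply mul_le_mul_of_nonneg_left _ hα0
                  exact le_trans (sN_tilde_le _) hBg
              _ = α k * β * stackNorm (g k) := by rw [hsg]; ring
  · -- (ii)
    have htg1 : tg (k+1) = sN (fun i => g (k+1) i - (I:ℝ)⁻¹ • ∑ j, g (k+1) j) := by
      rw [htg, stackNorm_eq_sN]
    have e4 : (fun i => g (k+1) i - (I:ℝ)⁻¹ • ∑ j, g (k+1) j)
        = fun i => (∑ j, W i j • (g k j + Gf j (x (k + 1) j) - Gf j (x k j)))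
            - (I:ℝ)⁻¹ • ∑ i', (∑ j, W i' j • (g k j + Gf j (x (k + 1) j) - Gf j (x k j))) := by
      funext i
      simp only [hgrec k hk]
    have e5 : (fun j => (g k j + Gf j (x (k + 1) j) - Gf j (x k j))
          - (I:ℝ)⁻¹ • ∑ j', (g k j' + Gf j' (x (k + 1) j') - Gf j' (x k j')))
        = fun j => (g k j - (I:ℝ)⁻¹ • ∑ j', g k j')
            + ((Gf j (x (k + 1) j) - Gf j (x k j))
              - (I:ℝ)⁻¹ • ∑ j', (Gf j' (x (k + 1) j') - Gf j' (x k j'))) := by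
      funext j
      rw [Finset.sum_sub_distrib, Finset.sum_add_distrib, Finset.sum_sub_distrib]
      module
    have hΔ : sN (fun j => Gf j (x (k + 1) j) - Gf j (x k j))
        ≤ γ * sN (fun j => x (k+1) j - x k j) := by
      apply sN_blockwise _ _ hγ.le
      intro i
      rw [← vecNorm_eq_sqrt, ← vecNorm_eq_sqrt]
      exact grad_lipschitz (f i) (Gf i) (Hf i) hγ.le (hC2 i) (hGf i) (hHf i)
        (hHbd i) (x (k+1) i) (x k i)
    have hmain : sN (fun j => (g k j + Gf j (x (k + 1) j) - Gf j (x k j))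
          - (I:ℝ)⁻¹ • ∑ j', (g k j' + Gf j' (x (k + 1) j') - Gf j' (x k j')))
        ≤ tg k + γ * (η * tx k + α k * (β * sN (g k))) := by
      rw [e5]
      calc sN (fun j => (g k j - (I:ℝ)⁻¹ • ∑ j', g k j')
            + ((Gf j (x (k + 1) j) - Gf j (x k j))
              - (I:ℝ)⁻¹ • ∑ j', (Gf j' (x (k + 1) j') - Gf j' (x k j'))))
          ≤ sN (fun j => g k j - (I:ℝ)⁻¹ • ∑ j', g k j')
            + sN (fun j => (Gf j (x (k + 1) j) - Gf j (x k j))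
              - (I:ℝ)⁻¹ • ∑ j', (Gf j' (x (k + 1) j') - Gf j' (x k j'))) := sN_add_le _ _
        _ ≤ tg k + γ * (η * tx k + α k * (β * sN (g k))) := by
            apply add_le_add
            · rw [htgm]
            · calc sN (fun j => (Gf j (x (k + 1) j) - Gf j (x k j))
                  - (I:ℝ)⁻¹ • ∑ j', (Gf j' (x (k + 1) j') - Gf j' (x k j')))
                  ≤ sN (fun j => Gf j (x (k + 1) j) - Gf j (x k j)) := sN_tilde_le _
                _ ≤ γ * sN (fun j => x (k+1) j - x k j) := hΔ
                _ ≤ γ * (η * tx k + α k * (β * sN (g k))) :=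
                    mul_le_mul_of_nonneg_left hdiffbd hγ.le
    calc tg (k+1)
        = sN (fun i => (∑ j, W i j • (g k j + Gf j (x (k + 1) j) - Gf j (x k j)))
            - (I:ℝ)⁻¹ • ∑ i', (∑ j, W i' j • (g k j + Gf j (x (k + 1) j) - Gf j (x k j)))) := by
          rw [htg1, e4]
      _ ≤ υ * sN (fun j => (g k j + Gf j (x (k + 1) j) - Gf j (x k j))
            - (I:ℝ)⁻¹ • ∑ j', (g k j' + Gf j' (x (k + 1) j') - Gf j' (x k j'))) := by
          have := sN_tildeW_le W hW_row hW_col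
            (fun j => g k j + Gf j (x (k + 1) j) - Gf j (x k j))
          rw [← hυ] at this
          exact this
      _ ≤ υ * (tg k + γ * (η * tx k + α k * (β * sN (g k)))) :=
          mul_le_mul_of_nonneg_left hmain hυ0
      _ = υ * (tg k + γ * η * tx k + α k * γ * β * stackNorm (g k)) := by rw [hsg]; ring
  · -- (iii)
    have Eflat : ∀ (hm : Fin I → Matrix (Fin N) (Fin N) ℝ),
        (fun i (p : Fin N × Fin N) => (hm i - (I:ℝ)⁻¹ • ∑ j, hm j) p.1 p.2)
        = fun i => (fun p : Fin N × Fin N => hm i p.1 p.2)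
            - (I:ℝ)⁻¹ • ∑ j, (fun p : Fin N × Fin N => hm j p.1 p.2) := by
      intro hm; funext i p
      simp [Matrix.sub_apply, Matrix.smul_apply, Matrix.sum_apply, Finset.sum_apply]
    have hth1 : th (k+1) = sN (fun i => (fun p : Fin N × Fin N => hmat (k+1) i p.1 p.2)
        - (I:ℝ)⁻¹ • ∑ j, (fun p : Fin N × Fin N => hmat (k+1) j p.1 p.2)) := by
      rw [hth, stackFrobNorm_eq_sN, Eflat (hmat (k+1))]
    have hthm : th k = sN (fun i => (fun p : Fin N × Fin N => hmat k i p.1 p.2)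
        - (I:ℝ)⁻¹ • ∑ j, (fun p : Fin N × Fin N => hmat k j p.1 p.2)) := by
      rw [hth, stackFrobNorm_eq_sN, Eflat (hmat k)]
    have Erec : (fun (i : Fin I) => (fun p : Fin N × Fin N => hmat (k+1) i p.1 p.2))
        = fun i => ∑ j, W i j • ((fun p : Fin N × Fin N => hmat k j p.1 p.2)
            + (fun p : Fin N × Fin N => Hf j (x (k+1) j) p.1 p.2)
            - (fun p : Fin N × Fin N => Hf j (x k j) p.1 p.2)) := by
      funext i p
      simp only [hhrec k hk]
      simp [Matrix.sum_apply, Matrix.smul_apply, Matrix.add_apply, Matrix.sub_apply,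
        Finset.sum_apply]
    have e4 : (fun i => (fun p : Fin N × Fin N => hmat (k+1) i p.1 p.2)
        - (I:ℝ)⁻¹ • ∑ j, (fun p : Fin N × Fin N => hmat (k+1) j p.1 p.2))
        = fun i => (∑ j, W i j • ((fun p : Fin N × Fin N => hmat k j p.1 p.2)
            + (fun p : Fin N × Fin N => Hf j (x (k+1) j) p.1 p.2)
            - (fun p : Fin N × Fin N => Hf j (x k j) p.1 p.2)))
          - (I:ℝ)⁻¹ • ∑ i', (∑ j, W i' j • ((fun p : Fin N × Fin N => hmat k j p.1 p.2)
            + (fun p : Fin N × Fin N => Hf j (x (k+1) j) p.1 p.2)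
            - (fun p : Fin N × Fin N => Hf j (x k j) p.1 p.2))) := by
      have hE := congrFun Erec
      funext i
      rw [hE i, Finset.sum_congr rfl (fun j _ => hE j)]
    have e5 : (fun j => ((fun p : Fin N × Fin N => hmat k j p.1 p.2)
            + (fun p : Fin N × Fin N => Hf j (x (k+1) j) p.1 p.2)
            - (fun p : Fin N × Fin N => Hf j (x k j) p.1 p.2))
          - (I:ℝ)⁻¹ • ∑ j', ((fun p : Fin N × Fin N => hmat k j' p.1 p.2)
            + (fun p : Fin N × Fin N => Hf j' (x (k+1) j') p.1 p.2)
            - (fun p : Fin N × Fin N => Hf j' (x k j') p.1 p.2)))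
        = fun j => ((fun p : Fin N × Fin N => hmat k j p.1 p.2)
              - (I:ℝ)⁻¹ • ∑ j', (fun p : Fin N × Fin N => hmat k j' p.1 p.2))
            + (((fun p : Fin N × Fin N => Hf j (x (k+1) j) p.1 p.2)
                - (fun p : Fin N × Fin N => Hf j (x k j) p.1 p.2))
              - (I:ℝ)⁻¹ • ∑ j', ((fun p : Fin N × Fin N => Hf j' (x (k+1) j') p.1 p.2)
                - (fun p : Fin N × Fin N => Hf j' (x k j') p.1 p.2))) := by
      funext j
      rw [Finset.sum_sub_distrib, Finset.sum_add_distrib, Finset.sum_sub_distrib]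
      module
    have hΔ : sN (fun j => (fun p : Fin N × Fin N => Hf j (x (k+1) j) p.1 p.2)
          - (fun p : Fin N × Fin N => Hf j (x k j) p.1 p.2))
        ≤ δ * sN (fun j => x (k+1) j - x k j) := by
      apply sN_blockwise _ _ hδ.le
      intro i
      have hl := hHlip i (x (k+1) i) (x k i)
      rw [vecNorm_eq_sqrt] at hl
      have e6 : ∑ a : Fin N × Fin N, (((fun p : Fin N × Fin N => Hf i (x (k+1) i) p.1 p.2)
            - (fun p : Fin N × Fin N => Hf i (x k i) p.1 p.2)) a)^2
          = ∑ a, ∑ b, (Hf i (x (k+1) i) a b - Hf i (x k i) a b) ^ 2 := by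
        rw [Fintype.sum_prod_type]
        rfl
      rw [e6]
      have e7 : ∑ a, ((x (k+1) i - x k i) a)^2 = ∑ a, ((x (k+1) i) a - (x k i) a)^2 := rfl
      exact hl
    have hmain : sN (fun j => ((fun p : Fin N × Fin N => hmat k j p.1 p.2)
            + (fun p : Fin N × Fin N => Hf j (x (k+1) j) p.1 p.2)
            - (fun p : Fin N × Fin N => Hf j (x k j) p.1 p.2))
          - (I:ℝ)⁻¹ • ∑ j', ((fun p : Fin N × Fin N => hmat k j' p.1 p.2)
            + (fun p : Fin N × Fin N => Hf j' (x (k+1) j') p.1 p.2)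
            - (fun p : Fin N × Fin N => Hf j' (x k j') p.1 p.2)))
        ≤ th k + δ * (η * tx k + α k * (β * sN (g k))) := by
      rw [e5]
      refine le_trans (sN_add_le _ _) (add_le_add ?_ ?_)
      · rw [hthm]
      · refine le_trans (sN_tilde_le _) (le_trans hΔ ?_)
        exact mul_le_mul_of_nonneg_left hdiffbd hδ.le
    calc th (k+1)
        = sN (fun i => (∑ j, W i j • ((fun p : Fin N × Fin N => hmat k j p.1 p.2)
            + (fun p : Fin N × Fin N => Hf j (x (k+1) j) p.1 p.2)
            - (fun p : Fin N × Fin N => Hf j (x k j) p.1 p.2)))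
          - (I:ℝ)⁻¹ • ∑ i', (∑ j, W i' j • ((fun p : Fin N × Fin N => hmat k j p.1 p.2)
            + (fun p : Fin N × Fin N => Hf j (x (k+1) j) p.1 p.2)
            - (fun p : Fin N × Fin N => Hf j (x k j) p.1 p.2)))) := by
          rw [hth1, e4]
      _ ≤ υ * sN (fun j => ((fun p : Fin N × Fin N => hmat k j p.1 p.2)
            + (fun p : Fin N × Fin N => Hf j (x (k+1) j) p.1 p.2)
            - (fun p : Fin N × Fin N => Hf j (x k j) p.1 p.2))
          - (I:ℝ)⁻¹ • ∑ j', ((fun p : Fin N × Fin N => hmat k j' p.1 p.2)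
            + (fun p : Fin N × Fin N => Hf j' (x (k+1) j') p.1 p.2)
            - (fun p : Fin N × Fin N => Hf j' (x k j') p.1 p.2))) := by
          have := sN_tildeW_le W hW_row hW_col
            (fun j => (fun p : Fin N × Fin N => hmat k j p.1 p.2)
              + (fun p : Fin N × Fin N => Hf j (x (k+1) j) p.1 p.2)
              - (fun p : Fin N × Fin N => Hf j (x k j) p.1 p.2))
          rw [← hυ] at this
          exact this
      _ ≤ υ * (th k + δ * (η * tx k + α k * (β * sN (g k)))) :=
          mul_le_mul_of_nonneg_left hmain hυ0
      _ = υ * (th k + δ * η * tx k + α k * δ * β * stackNorm (g k)) := by rw [hsg]; ring
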